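/- Let 0 < α < π, a = cos α, 2 ≤ k, and let β ∈ (0, α). For a function f₀ with s ↦ f₀(s)(s - a)^{(k-3)/2} integrable on (a, cos(α-2β)), the slice integral (σ_{k-2}/σ_{k-1}) ∫_{-1}^1 f₀(u sin β sin(α-β) + cos β cos(α-β)) (1-u²)^{(k-3)/2} du equals (σ_{k-2}/σ_{k-1}) (sin β sin(α-β))^{2-k} ∫_{cos α}^{cos(α-2β)} f₀(s) (s - cos α)^{(k-3)/2} (cos(α-2β) - s)^{(k-3)/2} ds. -/

import Mathlib

open MeasureTheory Set

/-- Lemma 5.1 (upper case), change-of-variables identity for the tangent spherical slice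
transform on the sphere: the slice integral over `u ∈ (-1,1)` equals an Abel-type integral
over `s ∈ (cos α, cos(α-2β))`. -/
theorem spherical_slice_change_of_variables (k : ℕ) (hk : 2 ≤ k)
    (α β : ℝ) (hα0 : 0 < α) (hαπ : α < Real.pi) (hβ0 : 0 < β) (hβα : β < α)
    (f₀ : ℝ → ℝ)
    (hf : IntegrableOn (fun s => f₀ s * (s - Real.cos α) ^ (((k : ℝ) - 3) / 2))
      (Set.Ioo (Real.cos α) (Real.cos (α - 2 * β))) volume)
    (σk1 σk2 : ℝ)
    (hσ1 : σk1 = 2 * Real.pi ^ ((k : ℝ) / 2) / Real.Gamma ((k : ℝ) / 2))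
    (hσ2 : σk2 = 2 * Real.pi ^ (((k : ℝ) - 1) / 2) / Real.Gamma (((k : ℝ) - 1) / 2)) :
    σk2 / σk1 *
      ∫ u in (-1:ℝ)..1,
        f₀ (u * Real.sin β * Real.sin (α - β) + Real.cos β * Real.cos (α - β)) *
          (1 - u ^ 2) ^ (((k : ℝ) - 3) / 2) =
    σk2 / σk1 * (Real.sin β * Real.sin (α - β)) ^ (2 - (k : ℝ)) *
      ∫ s in (Real.cos α)..(Real.cos (α - 2 * β)),
        f₀ s * (s - Real.cos α) ^ (((k : ℝ) - 3) / 2) *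
          (Real.cos (α - 2 * β) - s) ^ (((k : ℝ) - 3) / 2) := by
  set e : ℝ := ((k : ℝ) - 3) / 2 with he
  set p : ℝ := Real.sin β * Real.sin (α - β) with hp_def
  set q : ℝ := Real.cos β * Real.cos (α - β) with hq_def
  set A : ℝ := Real.cos α with hA_def
  set C : ℝ := Real.cos (α - 2 * β) with hC_def
  have hβπ : β < Real.pi := hβα.trans hαπ
  have hsinβ : 0 < Real.sin β := Real.sin_pos_of_pos_of_lt_pi hβ0 hβπ
  have hsinαβ : 0 < Real.sin (α - β) :=
    Real.sin_pos_of_pos_of_lt_pi (by linarith) (by linarith)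
  have hp : 0 < p := mul_pos hsinβ hsinαβ
  have hCA : C = q + p := by
    rw [hC_def, hp_def, hq_def, show α - 2 * β = (α - β) - β by ring, Real.cos_sub]
    ring
  have hAA : A = q - p := by
    rw [hA_def, hp_def, hq_def, show α = (α - β) + β by ring, Real.cos_add]
    ring
  have hAC : A ≤ C := by rw [hCA, hAA]; linarith
  -- Step 1: rewrite the integrand as a composition with `p * u + q`.
  have step1 :
      (∫ u in (-1:ℝ)..1,
        f₀ (u * Real.sin β * Real.sin (α - β) + q) * (1 - u ^ 2) ^ e) =
      ∫ u in (-1:ℝ)..1, (fun s => f₀ s * (1 - ((s - q) / p) ^ 2) ^ e) (p * u + q) := by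
    apply intervalIntegral.integral_congr
    intro u _
    simp only
    have h1 : u * Real.sin β * Real.sin (α - β) = p * u := by rw [hp_def]; ring
    have h2 : (p * u + q - q) / p = u := by field_simp; ring
    rw [h1, h2]
  -- Step 2: linear change of variables.
  have step2 := intervalIntegral.integral_comp_mul_add (a := (-1:ℝ)) (b := 1)
    (f := fun s => f₀ s * (1 - ((s - q) / p) ^ 2) ^ e) hp.ne' q
  rw [show p * (-1) + q = A by rw [hAA]; ring, show p * 1 + q = C by rw [hCA]; ring] at step2
  -- Step 3: rewrite the integrand on `[A, C]`.
  have step3 :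
      (∫ s in A..C, f₀ s * (1 - ((s - q) / p) ^ 2) ^ e) =
      (p ^ 2) ^ (-e) * ∫ s in A..C, f₀ s * (s - A) ^ e * (C - s) ^ e := by
    rw [← intervalIntegral.integral_const_mul]
    apply intervalIntegral.integral_congr
    intro s hs
    rw [Set.uIcc_of_le hAC] at hs
    dsimp only
    have h1 : 1 - ((s - q) / p) ^ 2 = (s - A) * (C - s) / p ^ 2 := by
      rw [hAA, hCA]; field_simp; ring
    have h2 : (0:ℝ) ≤ (s - A) * (C - s) :=
      mul_nonneg (by linarith [hs.1]) (by linarith [hs.2])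
    rw [h1, Real.div_rpow h2 (sq_nonneg p),
      Real.mul_rpow (by linarith [hs.1]) (by linarith [hs.2]),
      Real.rpow_neg (sq_nonneg p)]
    field_simp
  rw [step1, step2, step3, smul_eq_mul]
  have hconst : p⁻¹ * (p ^ 2) ^ (-e) = p ^ (2 - (k : ℝ)) := by
    rw [← Real.rpow_neg_one p, ← Real.rpow_natCast p 2, ← Real.rpow_mul hp.le,
      ← Real.rpow_add hp]
    congr 1
    rw [he]
    push_cast
    ring
  linear_combination (σk2 / σk1 * ∫ s in A..C, f₀ s * (s - A) ^ e * (C - s) ^ e) * hconst
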